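/- arXiv:2209.15092 — 2 statements merged into one kernel-verified Lean document; each statement's English description precedes it below -/
import Mathlib

section
/- Let C' be an n×n diagonal matrix with non-positive diagonal entries c'_i ≤ 0, and let p, q be two probability vectors of length n. Then the minimum of ⟨C', π⟩ over all couplings π (nonnegative n×n matrices with row sums p and column sums q) equals ∑_i min(p_i, q_i) · c'_i. -/
/-- For a diagonal cost matrix with non-positive diagonal entries `c i ≤ 0`,
the minimum transport cost over all couplings of probability vectors `p, q` equals
`∑ i, min (p i) (q i) * c i`. -/
theorem diagonal_negative_cost_ot {n : ℕ} (p q : Fin n → ℝ)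
    (hp : ∀ i, 0 ≤ p i) (hp1 : ∑ i, p i = 1)
    (hq : ∀ i, 0 ≤ q i) (hq1 : ∑ i, q i = 1)
    (c : Fin n → ℝ) (hc : ∀ i, c i ≤ 0) :
    IsLeast
      {x : ℝ | ∃ π : Fin n → Fin n → ℝ,
        (∀ i j, 0 ≤ π i j) ∧ (∀ i, ∑ j, π i j = p i) ∧ (∀ j, ∑ i, π i j = q j) ∧
        x = ∑ i, ∑ j, (if i = j then c i else 0) * π i j}
      (∑ i, min (p i) (q i) * c i) := by
  classical
  set m : Fin n → ℝ := fun i => min (p i) (q i) with hm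
  set S : ℝ := ∑ i, (p i - m i) with hSdef
  have hpm : ∀ i, 0 ≤ p i - m i := fun i => by
    simp [hm, sub_nonneg, min_le_left]
  have hqm : ∀ i, 0 ≤ q i - m i := fun i => by
    simp [hm, sub_nonneg, min_le_right]
  have hm0 : ∀ i, 0 ≤ m i := fun i => le_min (hp i) (hq i)
  have hS : 0 ≤ S := Finset.sum_nonneg fun i _ => hpm i
  have hSq : ∑ i, (q i - m i) = S := by
    simp [hSdef, Finset.sum_sub_distrib, hp1, hq1]
  have hzero : ∀ i, (p i - m i) * (q i - m i) = 0 := by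
    intro i
    rcases min_cases (p i) (q i) with h | h
    · simp [hm, h.1]
    · simp [hm, h.1]
  have hS0 : S = 0 → ∀ i, p i - m i = 0 := by
    intro h i
    have := (Finset.sum_eq_zero_iff_of_nonneg (fun j _ => hpm j)).mp (hSdef.symm.trans h)
    exact this i (Finset.mem_univ i)
  have hS0q : S = 0 → ∀ i, q i - m i = 0 := by
    intro h i
    have := (Finset.sum_eq_zero_iff_of_nonneg (fun j _ => hqm j)).mp (hSq.trans h)
    exact this i (Finset.mem_univ i)
  constructor
  · refine ⟨fun i j => (if i = j then m i else 0) + (p i - m i) * (q j - m j) / S,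
      ?_, ?_, ?_, ?_⟩
    · intro i j
      have h2 : 0 ≤ (p i - m i) * (q j - m j) / S :=
        div_nonneg (mul_nonneg (hpm i) (hqm j)) hS
      have h1 : 0 ≤ (if i = j then m i else 0) := by
        split <;> simp [hm0 i]
      linarith
    · intro i
      rw [Finset.sum_add_distrib]
      have h1 : ∑ j, (if i = j then m i else 0) = m i := by simp
      have h2 : ∑ j, (p i - m i) * (q j - m j) / S = p i - m i := by
        rw [← Finset.sum_div, ← Finset.mul_sum, hSq]
        by_cases h : S = 0
        · simp [h, hS0 h i]
        · field_simp
      rw [h1, h2]; ring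
    · intro j
      rw [Finset.sum_add_distrib]
      have h1 : ∑ i, (if i = j then m i else 0) = m j := by simp
      have h2 : ∑ i, (p i - m i) * (q j - m j) / S = q j - m j := by
        rw [← Finset.sum_div, ← Finset.sum_mul, ← hSdef]
        by_cases h : S = 0
        · simp [h, hS0q h j]
        · field_simp
      rw [h1, h2]; ring
    · apply Finset.sum_congr rfl
      intro i _
      rw [Finset.sum_eq_single i]
      · simp [hzero i, mul_comm]; exact Or.inl rfl
      · intro j _ hj
        simp [Ne.symm hj]
      · simp
  · rintro x ⟨π, hpos, hrow, hcol, rfl⟩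
    have hx : ∑ i, ∑ j, (if i = j then c i else 0) * π i j = ∑ i, c i * π i i := by
      apply Finset.sum_congr rfl
      intro i _
      rw [Finset.sum_eq_single i]
      · simp
      · intro j _ hj
        simp [Ne.symm hj]
      · simp
    rw [hx]
    apply Finset.sum_le_sum
    intro i _
    have hle : π i i ≤ m i := by
      have h1 : π i i ≤ p i := by
        rw [← hrow i]
        exact Finset.single_le_sum (fun j _ => hpos i j) (Finset.mem_univ i)
      have h2 : π i i ≤ q i := by
        rw [← hcol i]
        exact Finset.single_le_sum (fun j _ => hpos j i) (Finset.mem_univ i)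
      exact le_min h1 h2
    have := mul_le_mul_of_nonpos_right hle (hc i)
    linarith
end

section
/- Let p, q ∈ ℝ^n be probability vectors and let C be a cost matrix of the form C_{ij} = a_i + b_j + D_{ij} where D is diagonal with nonpositive diagonal d_i ≤ 0. Then OT_C(p,q) = ∑_i a_i p_i + ∑_j b_j q_j + ∑_i min(p_i, q_i) d_i. -/
/-- closed-form optimal transport cost for `C i j = a i + b j + D i j`
with `D` diagonal and nonpositive diagonal `d`. -/
theorem closed_form_ot {n : ℕ} (p q : Fin n → ℝ)
    (hp : ∀ i, 0 ≤ p i) (hp1 : ∑ i, p i = 1)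
    (hq : ∀ i, 0 ≤ q i) (hq1 : ∑ i, q i = 1)
    (a b d : Fin n → ℝ) (hd : ∀ i, d i ≤ 0) :
    IsLeast
      {x : ℝ | ∃ π : Fin n → Fin n → ℝ,
        (∀ i j, 0 ≤ π i j) ∧ (∀ i, ∑ j, π i j = p i) ∧ (∀ j, ∑ i, π i j = q j) ∧
        x = ∑ i, ∑ j, (a i + b j + (if i = j then d i else 0)) * π i j}
      ((∑ i, a i * p i) + (∑ j, b j * q j) + ∑ i, min (p i) (q i) * d i) := by
  set m : Fin n → ℝ := fun i => min (p i) (q i) with hm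
  set S : ℝ := 1 - ∑ i, m i with hS
  have hmp : ∀ i, m i ≤ p i := fun i => min_le_left _ _
  have hmq : ∀ i, m i ≤ q i := fun i => min_le_right _ _
  have hm0 : ∀ i, 0 ≤ m i := fun i => le_min (hp i) (hq i)
  have hSp : S = ∑ i, (p i - m i) := by
    rw [hS, Finset.sum_sub_distrib, hp1]
  have hSq : S = ∑ i, (q i - m i) := by
    rw [hS, Finset.sum_sub_distrib, hq1]
  have hS0 : 0 ≤ S := hSp ▸ Finset.sum_nonneg (fun i _ => sub_nonneg.2 (hmp i))
  have cancel : ∀ x : ℝ, (S = 0 → x = 0) → x * S / S = x := by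
    intro x h0
    rcases eq_or_lt_of_le hS0 with h | h
    · rw [h0 h.symm]; simp
    · field_simp
  have hSzp : S = 0 → ∀ i, p i - m i = 0 := by
    intro h0 i
    have := (Finset.sum_eq_zero_iff_of_nonneg
      (fun j _ => sub_nonneg.2 (hmp j))).1 (hSp.symm.trans h0)
    exact this i (Finset.mem_univ i)
  have hSzq : S = 0 → ∀ i, q i - m i = 0 := by
    intro h0 i
    have := (Finset.sum_eq_zero_iff_of_nonneg
      (fun j _ => sub_nonneg.2 (hmq j))).1 (hSq.symm.trans h0)
    exact this i (Finset.mem_univ i)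
  -- general cost decomposition
  have decomp : ∀ π : Fin n → Fin n → ℝ, (∀ i, ∑ j, π i j = p i) →
      (∀ j, ∑ i, π i j = q j) →
      ∑ i, ∑ j, (a i + b j + (if i = j then d i else 0)) * π i j
        = (∑ i, a i * p i) + (∑ j, b j * q j) + ∑ i, d i * π i i := by
    intro π hr hc
    have h1 : ∀ i j, (a i + b j + (if i = j then d i else 0)) * π i j
        = a i * π i j + b j * π i j + (if i = j then d i * π i j else 0) := by
      intro i j; split <;> ring
    simp_rw [h1, Finset.sum_add_distrib]
    congr 1
    · congr 1
      · simp_rw [← Finset.mul_sum]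
        exact Finset.sum_congr rfl fun i _ => by rw [hr i]
      · rw [Finset.sum_comm]
        simp_rw [← Finset.mul_sum]
        exact Finset.sum_congr rfl fun j _ => by rw [hc j]
    · refine Finset.sum_congr rfl fun i _ => ?_
      rw [Finset.sum_ite_eq]
      simp
  constructor
  · -- membership: explicit optimal coupling
    refine ⟨fun i j => (if i = j then m i else 0) + (p i - m i) * (q j - m j) / S,
      ?_, ?_, ?_, ?_⟩
    · intro i j
      have : (0:ℝ) ≤ (p i - m i) * (q j - m j) / S :=
        div_nonneg (mul_nonneg (sub_nonneg.2 (hmp i)) (sub_nonneg.2 (hmq j))) hS0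
      dsimp only
      split
      · exact add_nonneg (hm0 i) this
      · simpa using this
    · intro i
      rw [Finset.sum_add_distrib]
      have h1 : ∑ j, (if i = j then m i else 0) = m i := by
        rw [Finset.sum_ite_eq]; simp
      have h2 : ∑ j, (p i - m i) * (q j - m j) / S = p i - m i := by
        rw [← Finset.sum_div, ← Finset.mul_sum, ← hSq]
        exact cancel _ (fun h => hSzp h i)
      rw [h1, h2]; ring
    · intro j
      rw [Finset.sum_add_distrib]
      have h1 : ∑ i, (if i = j then m i else 0) = m j := by
        simp
      have h2 : ∑ i, (p i - m i) * (q j - m j) / S = q j - m j := by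
        simp_rw [mul_comm (p _ - m _) (q j - m j)]
        rw [← Finset.sum_div, ← Finset.mul_sum, ← hSp]
        exact cancel _ (fun h => hSzq h j)
      rw [h1, h2]; ring
    · rw [decomp]
      · congr 1
        refine Finset.sum_congr rfl fun i _ => ?_
        have hzero : (p i - m i) * (q i - m i) = 0 := by
          rcases min_choice (p i) (q i) with h | h <;>
            simp [hm, h]
        simp [hzero, mul_comm]; exact Or.inl rfl
      · intro i
        rw [Finset.sum_add_distrib]
        have h1 : ∑ j, (if i = j then m i else 0) = m i := by
          rw [Finset.sum_ite_eq]; simp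
        have h2 : ∑ j, (p i - m i) * (q j - m j) / S = p i - m i := by
          rw [← Finset.sum_div, ← Finset.mul_sum, ← hSq]
          exact cancel _ (fun h => hSzp h i)
        rw [h1, h2]; ring
      · intro j
        rw [Finset.sum_add_distrib]
        have h1 : ∑ i, (if i = j then m i else 0) = m j := by simp
        have h2 : ∑ i, (p i - m i) * (q j - m j) / S = q j - m j := by
          simp_rw [mul_comm (p _ - m _) (q j - m j)]
          rw [← Finset.sum_div, ← Finset.mul_sum, ← hSp]
          exact cancel _ (fun h => hSzq h j)
        rw [h1, h2]; ring
  · -- lower bound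
    rintro x ⟨π, hpos, hr, hc, rfl⟩
    rw [decomp π hr hc]
    have : ∑ i, m i * d i ≤ ∑ i, d i * π i i := by
      refine Finset.sum_le_sum fun i _ => ?_
      have hpi : π i i ≤ p i := hr i ▸
        Finset.single_le_sum (fun j _ => hpos i j) (Finset.mem_univ i)
      have hqi : π i i ≤ q i := hc i ▸
        Finset.single_le_sum (fun j _ => hpos j i) (Finset.mem_univ i)
      have hmi : π i i ≤ m i := le_min hpi hqi
      calc m i * d i = d i * m i := mul_comm _ _
        _ ≤ d i * π i i := mul_le_mul_of_nonpos_left hmi (hd i)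
    linarith
end
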